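/- Fix an integer n ≥ 1, let V̄(y) := 1/y (so that (−1)^k V̄^(k)(y) = k! y^{−k−1}), and let f : (0,∞) → ℝ be continuous with 1 ≤ f(y) ≤ 2 for all y > 0. Define V(y) := ∫_y^∞ ∫_{y₁}^∞ ⋯ ∫_{y_{n−1}}^∞ n! y_n^{−n−1} f(y_n) dy_n ⋯ dy₂ dy₁ for y > 0. Then V is well defined and finite, n-times differentiable, with V^(n)(y) = f(y) V̄^(n)(y) = (−1)^n n! f(y) y^{−n−1}; moreover k! y^{−k−1} = (−1)^k V̄^(k)(y) ≤ (−1)^k V^(k)(y) ≤ 2 (−1)^k V̄^(k)(y) = 2·k! y^{−k−1} for all y > 0 and k = 0,1,…,n, and consequently (k+1)/2 ≤ −y V^(k+1)(y)/V^(k)(y) ≤ 2(k+1) for all y > 0 and k = 0,1,…,n−1. -/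

import Mathlib

open MeasureTheory Filter Set Topology

/-- Iterated integration "from infinity": `iterIoiIntegral g 0 = g` and
`iterIoiIntegral g (j+1) y = ∫_{y}^{∞} iterIoiIntegral g j`. -/
noncomputable def iterIoiIntegral (g : ℝ → ℝ) : ℕ → ℝ → ℝ
  | 0 => g
  | j + 1 => fun y => ∫ t in Set.Ioi y, iterIoiIntegral g j t

lemma rpow_eq {m : ℕ} {t : ℝ} (ht0 : 0 < t) :
    t ^ (-(m + 1) : ℝ) = 1 / t ^ (m + 1) := by
  rw [Real.rpow_neg ht0.le, one_div]
  congr 1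
  rw [show ((m : ℝ) + 1) = ((m + 1 : ℕ) : ℝ) by push_cast; ring, Real.rpow_natCast]

lemma pw_int (m : ℕ) (hm : 1 ≤ m) {y : ℝ} (hy : 0 < y) :
    IntegrableOn (fun t : ℝ => 1 / t ^ (m + 1)) (Set.Ioi y) := by
  have h : (-(m + 1) : ℝ) < -1 := by
    have : (1 : ℝ) ≤ m := by exact_mod_cast hm
    linarith
  refine (integrableOn_Ioi_rpow_of_lt h hy).congr_fun (fun t ht => ?_) measurableSet_Ioi
  exact rpow_eq (lt_trans hy ht)

lemma pw_val (m : ℕ) (hm : 1 ≤ m) {y : ℝ} (hy : 0 < y) :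
    ∫ t in Set.Ioi y, 1 / t ^ (m + 1) = 1 / (m * y ^ m) := by
  have h : (-(m + 1) : ℝ) < -1 := by
    have : (1 : ℝ) ≤ m := by exact_mod_cast hm
    linarith
  have := integral_Ioi_rpow_of_lt h hy
  rw [setIntegral_congr_fun measurableSet_Ioi
    (fun t ht => (rpow_eq (lt_trans hy ht)).symm), this]
  have hm0 : (m : ℝ) ≠ 0 := by positivity
  rw [show (-(m+1) + 1 : ℝ) = -(m:ℝ) by ring, Real.rpow_neg hy.le,
    show (m:ℝ) = ((m:ℕ):ℝ) from rfl, Real.rpow_natCast]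
  field_simp

lemma hasDerivAt_Ioi_integral (h : ℝ → ℝ) (hc : ContinuousOn h (Set.Ioi 0))
    (hi : ∀ a > (0:ℝ), IntegrableOn h (Set.Ioi a)) {y : ℝ} (hy : 0 < y) :
    HasDerivAt (fun s => ∫ t in Set.Ioi s, h t) (-h y) y := by
  set a := y / 2 with ha
  have ha0 : 0 < a := by positivity
  have hay : a < y := by simp [ha]; linarith
  -- split identity on a neighborhood of y
  have key : ∀ s, a < s → (∫ t in Set.Ioi s, h t)
      = (∫ t in Set.Ioi a, h t) - ∫ t in a..s, h t := by
    intro s hs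
    rw [intervalIntegral.integral_of_le hs.le]
    have hsplit : Set.Ioc a s ∪ Set.Ioi s = Set.Ioi a := Set.Ioc_union_Ioi_eq_Ioi hs.le
    have hdisj : Disjoint (Set.Ioc a s) (Set.Ioi s) := by
      rw [Set.disjoint_left]; intro t ht ht'
      exact absurd ht.2 (not_le.mpr ht')
    have hia := hi a ha0
    have h1 : IntegrableOn h (Set.Ioc a s) := hia.mono_set (by rw [← hsplit]; exact Set.subset_union_left)
    have h2 : IntegrableOn h (Set.Ioi s) := hia.mono_set (by rw [← hsplit]; exact Set.subset_union_right)
    have := setIntegral_union hdisj measurableSet_Ioi h1 h2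
    rw [hsplit] at this
    rw [this]; ring
  have heq : (fun s => ∫ t in Set.Ioi s, h t)
      =ᶠ[𝓝 y] (fun s => (∫ t in Set.Ioi a, h t) - ∫ t in a..s, h t) := by
    filter_upwards [eventually_gt_nhds hay] with s hs using key s hs
  have hiy : IntervalIntegrable h volume a y := by
    rw [intervalIntegrable_iff_integrableOn_Ioc_of_le hay.le]
    exact (hi a ha0).mono_set Set.Ioc_subset_Ioi_self
  have hca : ContinuousAt h y := hc.continuousAt (isOpen_Ioi.mem_nhds hy)
  have hd : HasDerivAt (fun s => (∫ t in Set.Ioi a, h t) - ∫ t in a..s, h t) (-h y) y := by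
    have := (intervalIntegral.integral_hasDerivAt_right hiy
      (hc.stronglyMeasurableAtFilter isOpen_Ioi y hy) hca)
    exact ((hasDerivAt_const y (∫ t in Set.Ioi a, h t)).sub this).congr_deriv (by simp)
  exact hd.congr_of_eventuallyEq heq

lemma integrable_of_bounds (h : ℝ → ℝ) (M : ℕ) (hM : 1 ≤ M) (C : ℝ)
    (hc : ContinuousOn h (Set.Ioi 0))
    (hb : ∀ t > (0:ℝ), 0 ≤ h t ∧ h t ≤ C / t ^ (M + 1)) {y : ℝ} (hy : 0 < y) :
    IntegrableOn h (Set.Ioi y) := by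
  have hC : 0 ≤ C := by
    have := hb 1 one_pos; simp at this; linarith
  have hIoi : Set.Ioi y ⊆ Set.Ioi (0:ℝ) := fun t ht => lt_trans hy ht
  have hmeas : AEStronglyMeasurable h (volume.restrict (Set.Ioi y)) :=
    (hc.mono hIoi).aestronglyMeasurable measurableSet_Ioi
  have hint : IntegrableOn (fun t : ℝ => C * (1 / t ^ (M + 1))) (Set.Ioi y) :=
    (pw_int M hM hy).const_mul C
  refine Integrable.mono hint hmeas ?_
  refine (ae_restrict_iff' measurableSet_Ioi).mpr (ae_of_all _ fun t ht => ?_)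
  have ht0 : 0 < t := lt_trans hy ht
  have := hb t ht0
  rw [Real.norm_eq_abs, Real.norm_eq_abs, abs_of_nonneg this.1, abs_of_nonneg (by positivity)]
  calc h t ≤ C / t ^ (M + 1) := this.2
    _ = C * (1 / t ^ (M + 1)) := by ring

lemma bound_step (h : ℝ → ℝ) (M : ℕ) (hM : 1 ≤ M) (c C : ℝ) (hc0 : 0 ≤ c)
    (hcont : ContinuousOn h (Set.Ioi 0))
    (hb : ∀ t > (0:ℝ), c / t ^ (M + 1) ≤ h t ∧ h t ≤ C / t ^ (M + 1))
    {y : ℝ} (hy : 0 < y) :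
    c / M / y ^ M ≤ (∫ t in Set.Ioi y, h t) ∧
      (∫ t in Set.Ioi y, h t) ≤ C / M / y ^ M := by
  have hcC : c ≤ C := by
    have := hb 1 one_pos; simp at this; linarith
  have hint : IntegrableOn h (Set.Ioi y) := by
    refine integrable_of_bounds h M hM C hcont (fun t ht => ?_) hy
    have := hb t ht
    exact ⟨le_trans (by positivity) this.1, this.2⟩
  have hplow : IntegrableOn (fun t : ℝ => c * (1 / t ^ (M + 1))) (Set.Ioi y) :=
    (pw_int M hM hy).const_mul c
  have hphigh : IntegrableOn (fun t : ℝ => C * (1 / t ^ (M + 1))) (Set.Ioi y) :=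
    (pw_int M hM hy).const_mul C
  have hval : ∀ r : ℝ, (∫ t in Set.Ioi y, r * (1 / t ^ (M + 1))) = r / M / y ^ M := by
    intro r
    rw [MeasureTheory.integral_const_mul, pw_val M hM hy]
    have hM0 : (M:ℝ) ≠ 0 := by positivity
    field_simp
  constructor
  · rw [← hval c]
    refine setIntegral_mono_on hplow hint measurableSet_Ioi fun t ht => ?_
    have ht0 : 0 < t := lt_trans hy ht
    calc c * (1 / t ^ (M+1)) = c / t ^ (M+1) := by ring
      _ ≤ h t := (hb t ht0).1
  · rw [← hval C]
    refine setIntegral_mono_on hint hphigh measurableSet_Ioi fun t ht => ?_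
    have ht0 : 0 < t := lt_trans hy ht
    calc h t ≤ C / t ^ (M+1) := (hb t ht0).2
      _ = C * (1 / t ^ (M+1)) := by ring

lemma main_ind (n : ℕ) (g : ℝ → ℝ) (hgc : ContinuousOn g (Set.Ioi 0))
    (hgb : ∀ t > (0:ℝ), ((n.factorial : ℝ)) / t ^ (n + 1) ≤ g t ∧
      g t ≤ 2 * (n.factorial : ℝ) / t ^ (n + 1)) :
    ∀ j ≤ n, ContinuousOn (iterIoiIntegral g j) (Set.Ioi 0) ∧
      ∀ y > (0:ℝ), ((n - j).factorial : ℝ) / y ^ (n - j + 1) ≤ iterIoiIntegral g j y ∧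
        iterIoiIntegral g j y ≤ 2 * ((n - j).factorial : ℝ) / y ^ (n - j + 1) := by
  intro j
  induction j with
  | zero => intro _; exact ⟨hgc, fun y hy => by simpa [iterIoiIntegral] using hgb y hy⟩
  | succ j ih =>
    intro hj1
    have hj : j < n := hj1
    obtain ⟨hc, hb⟩ := ih hj.le
    set m := n - (j + 1) with hmdef
    have hm : n - j = m + 1 := by omega
    have hm1 : 1 ≤ m + 1 := le_add_self.trans_eq rfl
    have hb' : ∀ t > (0:ℝ), ((m+1).factorial : ℝ) / t ^ (m + 1 + 1) ≤ iterIoiIntegral g j t ∧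
        iterIoiIntegral g j t ≤ 2 * ((m+1).factorial : ℝ) / t ^ (m + 1 + 1) := by
      intro t ht
      have := hb t ht
      rw [hm] at this
      exact this
    have hfpos : (0:ℝ) ≤ ((m+1).factorial : ℝ) := by positivity
    have key := fun (y : ℝ) (hy : 0 < y) =>
      bound_step (iterIoiIntegral g j) (m+1) (Nat.le_add_left 1 m)
        ((m+1).factorial : ℝ) (2 * ((m+1).factorial : ℝ)) hfpos hc hb' hy
    have hfact : ((m+1).factorial : ℝ) / ((m+1 : ℕ) : ℝ) = (m.factorial : ℝ) := by
      rw [Nat.factorial_succ]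
      have : ((m:ℝ) + 1) ≠ 0 := by positivity
      push_cast
      field_simp
    have hint : ∀ a > (0:ℝ), IntegrableOn (iterIoiIntegral g j) (Set.Ioi a) := by
      intro a ha
      refine integrable_of_bounds _ (m+1) (Nat.le_add_left 1 m) (2 * ((m+1).factorial : ℝ)) hc
        (fun t ht => ?_) ha
      have := hb' t ht
      exact ⟨le_trans (by positivity) this.1, this.2⟩
    have hshow : iterIoiIntegral g (j+1) = fun y => ∫ t in Set.Ioi y, iterIoiIntegral g j t := rfl
    constructor
    · intro y hy
      have := (hasDerivAt_Ioi_integral (iterIoiIntegral g j) hc hint hy).continuousAt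
      rw [hshow]
      exact this.continuousWithinAt
    · intro y hy
      have h2 := key y hy
      rw [hshow]
      have e1 : ((n - (j+1)).factorial : ℝ) / y ^ (n - (j+1) + 1)
          = ((m+1).factorial : ℝ) / ((m+1:ℕ):ℝ) / y ^ (m+1) := by
        rw [← hmdef, ← hfact]
      have e2 : 2 * ((n - (j+1)).factorial : ℝ) / y ^ (n - (j+1) + 1)
          = 2 * ((m+1).factorial : ℝ) / ((m+1:ℕ):ℝ) / y ^ (m+1) := by
        rw [← hmdef, ← hfact]; ring
      rw [e1, e2]
      exact_mod_cast h2


/-- Fix `n ≥ 1`, let `V̄(y) = 1/y` (so `(−1)^k V̄^{(k)}(y) = k! y^{−k−1}`)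
and let `f : (0,∞) → ℝ` be continuous with `1 ≤ f ≤ 2`.  Define
`V(y) = ∫_y^∞ ⋯ ∫_{y_{n−1}}^∞ n! y_n^{−n−1} f(y_n) dy_n ⋯ dy₁` (an `n`-fold iterated
integral).  Then `V` is well defined and finite (each level is integrable), `n`-times
differentiable with `V^{(n)}(y) = (−1)^n n! f(y) y^{−n−1}`, it satisfies
`k! y^{−k−1} ≤ (−1)^k V^{(k)}(y) ≤ 2 k! y^{−k−1}` for `k = 0,…,n`, and consequently
`(k+1)/2 ≤ −y V^{(k+1)}(y)/V^{(k)}(y) ≤ 2(k+1)` for `k = 0,…,n−1`. -/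
theorem stmt13 (n : ℕ) (hn : 1 ≤ n) (f : ℝ → ℝ)
    (hfc : ContinuousOn f (Set.Ioi 0))
    (hf12 : ∀ y > (0:ℝ), 1 ≤ f y ∧ f y ≤ 2) :
    (∀ j < n, ∀ y > (0:ℝ),
      MeasureTheory.IntegrableOn
        (iterIoiIntegral (fun t => (n.factorial : ℝ) * f t / t ^ (n + 1)) j)
        (Set.Ioi y)) ∧
    ∃ dV : ℕ → ℝ → ℝ,
      dV 0 = iterIoiIntegral (fun t => (n.factorial : ℝ) * f t / t ^ (n + 1)) n ∧
      (∀ k < n, ∀ y > (0:ℝ), HasDerivAt (dV k) (dV (k + 1) y) y) ∧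
      (∀ y > (0:ℝ), dV n y = (-1 : ℝ) ^ n * ((n.factorial : ℝ) * f y / y ^ (n + 1))) ∧
      (∀ k ≤ n, ∀ y > (0:ℝ),
        (k.factorial : ℝ) / y ^ (k + 1) ≤ (-1 : ℝ) ^ k * dV k y ∧
        (-1 : ℝ) ^ k * dV k y ≤ 2 * (k.factorial : ℝ) / y ^ (k + 1)) ∧
      (∀ k < n, ∀ y > (0:ℝ),
        ((k : ℝ) + 1) / 2 ≤ -(y * dV (k + 1) y) / dV k y ∧
        -(y * dV (k + 1) y) / dV k y ≤ 2 * ((k : ℝ) + 1)) := by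
  set g : ℝ → ℝ := fun t => (n.factorial : ℝ) * f t / t ^ (n + 1) with hg
  have hgc : ContinuousOn g (Set.Ioi 0) := by
    apply ContinuousOn.div (continuousOn_const.mul hfc) (continuous_pow (n+1)).continuousOn
    intro t ht
    exact pow_ne_zero _ (ne_of_gt ht)
  have hgb : ∀ t > (0:ℝ), ((n.factorial : ℝ)) / t ^ (n + 1) ≤ g t ∧
      g t ≤ 2 * (n.factorial : ℝ) / t ^ (n + 1) := by
    intro t ht
    have hf := hf12 t ht
    have hp : (0:ℝ) < t ^ (n+1) := by positivity
    have hF : (0:ℝ) < (n.factorial : ℝ) := by positivity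
    constructor
    · rw [div_le_div_iff₀ hp hp]
      have h1 : (n.factorial:ℝ) ≤ (n.factorial:ℝ) * f t := by nlinarith [hf.1]
      exact mul_le_mul_of_nonneg_right h1 hp.le
    · rw [div_le_div_iff₀ hp hp]
      have h2 : (n.factorial:ℝ) * f t ≤ 2 * (n.factorial:ℝ) := by nlinarith [hf.2]
      exact mul_le_mul_of_nonneg_right h2 hp.le
  have hmain := main_ind n g hgc hgb
  -- integrability at all levels j ≤ n (needs n - j ≥ 1 only for j < n)
  have hintall : ∀ j < n, ∀ y > (0:ℝ), IntegrableOn (iterIoiIntegral g j) (Set.Ioi y) := by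
    intro j hj y hy
    obtain ⟨hc, hb⟩ := hmain j hj.le
    have hm1 : 1 ≤ n - j := by omega
    refine integrable_of_bounds _ (n - j) hm1 (2 * ((n-j).factorial : ℝ)) hc
      (fun t ht => ?_) hy
    have := hb t ht
    exact ⟨le_trans (by positivity) this.1, this.2⟩
  refine ⟨hintall, fun k => fun y => (-1:ℝ)^k * iterIoiIntegral g (n - k) y, ?_, ?_, ?_, ?_, ?_⟩
  · funext y; simp
  · -- derivatives
    intro k hk y hy
    set m := n - (k + 1) with hmdef
    have hmn : m < n := by omega
    have hnk : n - k = m + 1 := by omega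
    obtain ⟨hc, _⟩ := hmain m hmn.le
    have hint := fun a (ha : (0:ℝ) < a) => hintall m hmn a ha
    have hD := hasDerivAt_Ioi_integral (iterIoiIntegral g m) hc hint hy
    have hshow : iterIoiIntegral g (m+1) = fun s => ∫ t in Set.Ioi s, iterIoiIntegral g m t := rfl
    have hD2 : HasDerivAt (iterIoiIntegral g (m+1)) (-(iterIoiIntegral g m y)) y := by
      rw [hshow]; exact hD
    have hder := hD2.const_mul ((-1:ℝ)^k)
    show HasDerivAt (fun s => (-1:ℝ)^k * iterIoiIntegral g (n-k) s)
      ((-1:ℝ)^(k+1) * iterIoiIntegral g (n-(k+1)) y) y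
    rw [hnk, ← hmdef]
    refine hder.congr_deriv ?_
    rw [pow_succ]
    ring
  · intro y hy
    simp only [Nat.sub_self]
    rfl
  · -- bounds
    intro k hk y hy
    have hb := (hmain (n - k) (Nat.sub_le n k)).2 y hy
    have hnn : n - (n - k) = k := by omega
    rw [hnn] at hb
    have hsq : ((-1:ℝ)^k) * ((-1:ℝ)^k) = 1 := by
      rw [← pow_add]
      exact Even.neg_one_pow ⟨k, by ring⟩
    constructor
    · calc (k.factorial:ℝ)/y^(k+1) ≤ iterIoiIntegral g (n-k) y := hb.1
        _ = (-1:ℝ)^k * ((-1:ℝ)^k * iterIoiIntegral g (n-k) y) := by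
          rw [← mul_assoc, hsq, one_mul]
    · calc (-1:ℝ)^k * ((-1:ℝ)^k * iterIoiIntegral g (n-k) y)
          = iterIoiIntegral g (n-k) y := by rw [← mul_assoc, hsq, one_mul]
        _ ≤ 2 * (k.factorial:ℝ)/y^(k+1) := by
          have := hb.2; rw [mul_div_assoc]; rw [mul_div_assoc] at this; exact this
  · -- ratios
    intro k hk y hy
    beta_reduce
    set a : ℝ := (-1:ℝ)^k * iterIoiIntegral g (n - k) y with hadef
    set b : ℝ := (-1:ℝ)^(k+1) * iterIoiIntegral g (n - (k+1)) y with hbdef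
    -- bounds on A := iter (n-k) y and B := iter (n-(k+1)) y
    have hbA := (hmain (n - k) (Nat.sub_le n k)).2 y hy
    have hbB := (hmain (n - (k+1)) (Nat.sub_le n (k+1))).2 y hy
    have e1 : n - (n - k) = k := by omega
    have e2 : n - (n - (k+1)) = k + 1 := by omega
    rw [e1] at hbA; rw [e2] at hbB
    set A : ℝ := iterIoiIntegral g (n - k) y with hAdef
    set B : ℝ := iterIoiIntegral g (n - (k+1)) y with hBdef
    have hP : (0:ℝ) < y ^ (k+1) := by positivity
    have hF : (0:ℝ) < (k.factorial : ℝ) := by positivity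
    have hApos : 0 < A := lt_of_lt_of_le (by positivity) hbA.1
    have hBpos : 0 < B := lt_of_lt_of_le (by positivity) hbB.1
    have hratio : -(y * b) / a = y * B / A := by
      rw [hadef, hbdef, pow_succ]
      have h1 : ((-1:ℝ)^k) ≠ 0 := by positivity
      field_simp
    have hfac : ((k+1).factorial : ℝ) = ((k:ℝ)+1) * (k.factorial : ℝ) := by
      rw [Nat.factorial_succ]; push_cast; ring
    have hyp : y ^ (k+1+1) = y^(k+1) * y := by rw [pow_succ]
    have hA1 : (k.factorial:ℝ) ≤ A * y^(k+1) := by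
      rw [div_le_iff₀ hP] at hbA; exact hbA.1
    have hA2 : A * y^(k+1) ≤ 2 * (k.factorial:ℝ) := by
      have := hbA.2; rw [← le_div_iff₀ hP]; exact this
    have hB1 : ((k:ℝ)+1) * (k.factorial:ℝ) ≤ B * (y^(k+1) * y) := by
      have := hbB.1; rw [div_le_iff₀ (by positivity : (0:ℝ) < y^(k+1+1))] at this
      rw [← hyp, ← hfac]; exact this
    have hB2 : B * (y^(k+1) * y) ≤ 2 * (((k:ℝ)+1) * (k.factorial:ℝ)) := by
      have h := hbB.2
      rw [le_div_iff₀ (by positivity : (0:ℝ) < y^(k+1+1))] at h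
      rw [hyp, hfac] at h
      exact h
    rw [hratio]
    constructor
    · rw [le_div_iff₀ hApos]
      nlinarith [mul_pos hApos hP, mul_pos hBpos (mul_pos hP hy)]
    · rw [div_le_iff₀ hApos]
      nlinarith [mul_pos hApos hP, mul_pos hBpos (mul_pos hP hy)]
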